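/- Let X = ℝ with the usual metric d(x,y) = |x−y|, let r̃ = (r_n) be a scaling sequence, let F be a maximal self-stable subset of Seq(X,r̃), and let b̃ = (b_n) ∈ F satisfy lim_{n→∞} |b_n|/r_n > 0. Then: (a) for every ỹ = (y_n) ∈ F the finite limit lim_{n→∞} y_n/b_n exists; (b) conversely, if ỹ = (y_n) is a sequence of reals with lim_{n→∞} |y_n| = ∞ and the finite limit lim_{n→∞} y_n/b_n exists, then ỹ ∈ F. -/

import Mathlib

open Filter Topology

/-- Two sequences of points of `X` are mutually stable with respect to the scaling
sequence `r` if the finite limit `lim dist (x n) (y n) / r n` exists. -/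
def MutStable {X : Type*} [MetricSpace X] (r : ℕ → ℝ) (x y : ℕ → X) : Prop :=
  ∃ l : ℝ, Tendsto (fun n => dist (x n) (y n) / r n) atTop (𝓝 l)

/-- `Seq(X, r̃)`: the set of sequences `x` of points of `X` such that the finite limit
`d̃_r̃(x) = lim dist (x n) p / r n` exists. -/
def SeqSet {X : Type*} [MetricSpace X] (p : X) (r : ℕ → ℝ) : Set (ℕ → X) :=
  {x | ∃ l : ℝ, Tendsto (fun n => dist (x n) p / r n) atTop (𝓝 l)}

/-- `X̃⁰_{∞,r̃}`: the set of sequences `z` of points of `X` with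
`lim dist (z n) p / r n = 0`. -/
def NullSeq {X : Type*} [MetricSpace X] (p : X) (r : ℕ → ℝ) : Set (ℕ → X) :=
  {z | Tendsto (fun n => dist (z n) p / r n) atTop (𝓝 0)}

/-- A set `F ⊆ Seq(X, r̃)` is self-stable if any two of its elements are mutually
stable. -/
def SelfStable {X : Type*} [MetricSpace X] (p : X) (r : ℕ → ℝ) (F : Set (ℕ → X)) : Prop :=
  F ⊆ SeqSet p r ∧ ∀ x ∈ F, ∀ y ∈ F, MutStable r x y

/-- A maximal self-stable subset of `Seq(X, r̃)`. -/
def MaxSelfStable {X : Type*} [MetricSpace X] (p : X) (r : ℕ → ℝ) (F : Set (ℕ → X)) : Prop :=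
  SelfStable p r F ∧ ∀ G, SelfStable p r G → F ⊆ G → F = G

theorem maxSelfStable_real_ratio_limits (r : ℕ → ℝ)
    (hr₁ : ∀ n, 0 < r n) (hr₂ : Tendsto r atTop atTop)
    (F : Set (ℕ → ℝ)) (hF : MaxSelfStable (0 : ℝ) r F)
    (b : ℕ → ℝ) (hb : b ∈ F) (L : ℝ) (hL : 0 < L)
    (hbL : Tendsto (fun n => |b n| / r n) atTop (𝓝 L)) :
    (∀ y ∈ F, ∃ c : ℝ, Tendsto (fun n => y n / b n) atTop (𝓝 c)) ∧
    (∀ y : ℕ → ℝ, Tendsto (fun n => |y n|) atTop atTop →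
      (∃ c : ℝ, Tendsto (fun n => y n / b n) atTop (𝓝 c)) → y ∈ F) := by
  obtain ⟨⟨hFsub, hFstab⟩, hFmax⟩ := hF
  have hbne : ∀ᶠ n in atTop, b n ≠ 0 := by
    filter_upwards [hbL.eventually (eventually_gt_nhds hL)] with n hn
    intro h
    rw [h] at hn
    simp at hn
  have key : ∀ y ∈ SeqSet (0:ℝ) r, MutStable r y b →
      ∃ c : ℝ, Tendsto (fun n => y n / b n) atTop (𝓝 c) := by
    rintro y ⟨M, hM⟩ ⟨D, hD⟩
    simp only [Real.dist_eq, sub_zero] at hM hD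
    have h1 : Tendsto (fun n => |y n / b n|) atTop (𝓝 (M / L)) := by
      refine (hM.div hbL (ne_of_gt hL)).congr' ?_
      filter_upwards [hbne] with n hn
      have hr := (hr₁ n).ne'
      rw [abs_div]
      simp only [Pi.div_apply]
      field_simp
    have h2 : Tendsto (fun n => |y n / b n - 1|) atTop (𝓝 (D / L)) := by
      refine (hD.div hbL (ne_of_gt hL)).congr' ?_
      filter_upwards [hbne] with n hn
      have hr := (hr₁ n).ne'
      have h : y n / b n - 1 = (y n - b n) / b n := by field_simp
      rw [h, abs_div]
      simp only [Pi.div_apply]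
      field_simp
    refine ⟨((M / L) ^ 2 - (D / L) ^ 2 + 1) / 2, ?_⟩
    have h3 : Tendsto (fun n => (|y n / b n| ^ 2 - |y n / b n - 1| ^ 2 + 1) / 2)
        atTop (𝓝 (((M / L) ^ 2 - (D / L) ^ 2 + 1) / 2)) :=
      (((h1.pow 2).sub (h2.pow 2)).add_const 1).div_const 2
    refine h3.congr' ?_
    filter_upwards with n
    rw [sq_abs, sq_abs]
    ring
  have partA : ∀ y ∈ F, ∃ c : ℝ, Tendsto (fun n => y n / b n) atTop (𝓝 c) :=
    fun y hy => key y (hFsub hy) (hFstab y hy b hb)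
  refine ⟨partA, ?_⟩
  rintro y _ ⟨c, hc⟩
  -- y ∈ SeqSet
  have hySeq : y ∈ SeqSet (0:ℝ) r := by
    refine ⟨|c| * L, ?_⟩
    refine (hc.abs.mul hbL).congr' ?_
    filter_upwards [hbne] with n hn
    have hr := (hr₁ n).ne'
    rw [Real.dist_eq, sub_zero, abs_div]
    field_simp
  -- mutual stability with each x ∈ F
  have hMut : ∀ x ∈ F, MutStable r x y := by
    intro x hx
    obtain ⟨cx, hcx⟩ := partA x hx
    refine ⟨|cx - c| * L, ?_⟩
    refine (((hcx.sub hc).abs).mul hbL).congr' ?_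
    filter_upwards [hbne] with n hn
    have hr := (hr₁ n).ne'
    have h : x n / b n - y n / b n = (x n - y n) / b n := by field_simp
    rw [h, Real.dist_eq, abs_div]
    field_simp
  have hG : SelfStable (0:ℝ) r (insert y F) := by
    constructor
    · rintro z (rfl | hz)
      · exact hySeq
      · exact hFsub hz
    · rintro u (rfl | hu) v (rfl | hv)
      · exact ⟨0, by simp [MutStable]⟩
      · obtain ⟨l, hl⟩ := hMut v hv
        exact ⟨l, by simpa only [dist_comm] using hl⟩
      · exact hMut u hu
      · exact hFstab u hu v hv
  have := hFmax _ hG (Set.subset_insert y F)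
  rw [this]
  exact Set.mem_insert y F
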